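/- Fix n ≥ 1. Define the polynomial G_n(x) by G_n(k) = h_n(1², 2², …, (k+1)²) for all non-negative integers k (complete homogeneous symmetric polynomial of degree n in the squares 1², …, (k+1)²). Then the coefficient of x in G_n(x−1) equals B_{2n}/n, where B_{2n} is a Bernoulli number. -/

import Mathlib

open scoped Classical

/-- The complete homogeneous symmetric polynomial of degree `n` evaluated at the squares
`1², 2², …, m²`, i.e. `∑_{1 ≤ z₁ ≤ ⋯ ≤ z_n ≤ m} z₁² ⋯ z_n²`. -/
noncomputable def hSq (n m : ℕ) : ℚ :=
  ∑ f ∈ Finset.univ.filter (fun f : Fin n → Fin m => Monotone f), ∏ i, ((f i : ℚ) + 1) ^ 2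

open Finset Polynomial

noncomputable def psum (p m : ℕ) : ℚ := ∑ j ∈ Finset.range m, ((j:ℚ)+1)^p

lemma psum_succ (p m : ℕ) : psum p (m+1) = psum p m + ((m:ℚ)+1)^p :=
  Finset.sum_range_succ _ _

lemma hSq_zero (m : ℕ) : hSq 0 m = 1 := by
  have h : (Finset.univ.filter (fun f : Fin 0 → Fin m => Monotone f)) = Finset.univ := by
    apply Finset.filter_true_of_mem
    intro f _ a
    exact a.elim0
  rw [hSq, h]
  simp

lemma hSq_succ_zero (n : ℕ) : hSq (n+1) 0 = 0 := by
  haveI : IsEmpty (Fin (n+1) → Fin 0) := ⟨fun f => (f 0).elim0⟩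
  rw [hSq, Finset.univ_eq_empty, Finset.filter_empty, Finset.sum_empty]

lemma fiber_sum (n m : ℕ) (v : Fin m) :
    ∑ f ∈ Finset.univ.filter
        (fun f : Fin (n+1) → Fin m => Monotone f ∧ f (Fin.last n) = v),
      ∏ i, ((f i : ℚ) + 1) ^ 2
    = ((v:ℚ)+1)^2 * hSq n (v+1) := by
  rw [hSq, Finset.mul_sum]
  have hv1 : (v : ℕ) + 1 ≤ m := v.isLt
  refine Finset.sum_nbij'
    (i := fun f (k : Fin n) => (⟨min (f k.castSucc) v, by
      have := min_le_right ((f k.castSucc : ℕ)) (v : ℕ); omega⟩ : Fin ((v:ℕ)+1)))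
    (j := fun g => Fin.snoc (fun k => (⟨g k, by have := (g k).isLt; omega⟩ : Fin m)) v)
    ?_ ?_ ?_ ?_ ?_
  · -- maps to
    intro f hf
    rw [Finset.mem_filter] at hf
    obtain ⟨-, hmono, hlast⟩ := hf
    refine Finset.mem_filter.mpr ⟨Finset.mem_univ _, ?_⟩
    intro a b hab
    simp only [Fin.mk_le_mk]
    have : f a.castSucc ≤ f b.castSucc := hmono (Fin.castSucc_le_castSucc_iff.mpr hab)
    exact min_le_min (Fin.le_def.mp this) le_rfl
  · -- maps back
    intro g hg
    rw [Finset.mem_filter] at hg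
    obtain ⟨-, hmono⟩ := hg
    refine Finset.mem_filter.mpr ⟨Finset.mem_univ _, ?_, by simp⟩
    intro a b hab
    rcases Fin.eq_castSucc_or_eq_last b with ⟨b', rfl⟩ | rfl
    · rcases Fin.eq_castSucc_or_eq_last a with ⟨a', rfl⟩ | rfl
      · simp only [Fin.snoc_castSucc]
        have : g a' ≤ g b' := hmono (Fin.castSucc_le_castSucc_iff.mp hab)
        exact Fin.mk_le_mk.mpr (Fin.le_def.mp this)
      · exact absurd hab (not_le.mpr (Fin.castSucc_lt_last b'))
    · rcases Fin.eq_castSucc_or_eq_last a with ⟨a', rfl⟩ | rfl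
      · simp only [Fin.snoc_castSucc, Fin.snoc_last]
        exact Fin.mk_le_mk.mpr (by have := (g a').isLt; omega)
      · exact le_rfl
  · -- left inverse
    intro f hf
    rw [Finset.mem_filter] at hf
    obtain ⟨-, hmono, hlast⟩ := hf
    funext b
    rcases Fin.eq_castSucc_or_eq_last b with ⟨b', rfl⟩ | rfl
    · have h1 : (f b'.castSucc : ℕ) ≤ (v : ℕ) := by
        have := hmono (Fin.le_last b'.castSucc)
        rw [hlast] at this
        exact Fin.le_def.mp this
      apply Fin.ext
      simp [min_eq_left h1]
    · simp [Fin.snoc_last, hlast]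
  · -- right inverse
    intro g hg
    funext k
    apply Fin.ext
    have := (g k).isLt
    simp [Fin.snoc_castSucc]; omega
  · -- values
    intro f hf
    rw [Finset.mem_filter] at hf
    obtain ⟨-, hmono, hlast⟩ := hf
    rw [Fin.prod_univ_castSucc]
    rw [hlast, mul_comm]
    congr 1
    apply Finset.prod_congr rfl
    intro k _
    have h1 : (f k.castSucc : ℕ) ≤ (v : ℕ) := by
      have := hmono (Fin.le_last k.castSucc)
      rw [hlast] at this
      exact Fin.le_def.mp this
    simp [min_eq_left h1]

lemma hSq_rec (n m : ℕ) :
    hSq (n+1) m = ∑ v ∈ Finset.range m, ((v:ℚ)+1)^2 * hSq n (v+1) := by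
  have h1 : hSq (n+1) m = ∑ v : Fin m, ((v:ℚ)+1)^2 * hSq n ((v:ℕ)+1) := by
    rw [hSq, ← Finset.sum_fiberwise_of_maps_to
      (g := fun f : Fin (n+1) → Fin m => f (Fin.last n)) (t := Finset.univ)
      (fun f _ => Finset.mem_univ _)]
    refine Finset.sum_congr rfl fun v _ => ?_
    rw [← fiber_sum n m v, Finset.filter_filter]
  rw [h1, ← Fin.sum_univ_eq_sum_range (fun v => ((v:ℚ)+1)^2 * hSq n (v+1)) m]

lemma hSq_R2 (n m : ℕ) :
    hSq (n+1) (m+1) = hSq (n+1) m + ((m:ℚ)+1)^2 * hSq n (m+1) := by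
  rw [hSq_rec, hSq_rec, Finset.sum_range_succ]

lemma hSq_L (n m : ℕ) :
    hSq n (m+1) = ∑ j ∈ Finset.range (n+1), ((m:ℚ)+1)^(2*(n-j)) * hSq j m := by
  induction n with
  | zero => simp [hSq_zero]
  | succ n ih =>
    rw [hSq_R2, ih, Finset.mul_sum]
    have h : ∀ j ∈ Finset.range (n+1),
        ((m:ℚ)+1)^2 * (((m:ℚ)+1)^(2*(n-j)) * hSq j m)
        = ((m:ℚ)+1)^(2*(n+1-j)) * hSq j m := by
      intro j hj
      rw [← mul_assoc, ← pow_add]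
      have := Finset.mem_range.mp hj
      congr 2
      omega
    rw [Finset.sum_congr rfl h,
      Finset.sum_range_succ (fun j => ((m:ℚ)+1)^(2*(n+1-j)) * hSq j m) (n+1)]
    simp only [Nat.sub_self, mul_zero, pow_zero, one_mul]
    ring

lemma newton (n : ℕ) : ∀ m : ℕ,
    ∑ j ∈ Finset.range n, psum (2*(n-j)) m * hSq j m = n * hSq n m := by
  induction n with
  | zero => intro m; simp
  | succ n ihn =>
    intro m
    induction m with
    | zero => simp [psum, hSq_succ_zero]
    | succ m ihm =>
      have key1 : ∀ M : ℕ, ∑ j ∈ Finset.range (n+1), psum (2*(n+1-j)) M * hSq j M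
          = (∑ i ∈ Finset.range n, psum (2*(n-i)) M * hSq (i+1) M) + psum (2*(n+1)) M := by
        intro M
        rw [Finset.sum_range_succ' (fun j => psum (2*(n+1-j)) M * hSq j M) n]
        simp [hSq_zero]
      -- expand LHS
      rw [key1]
      have step1 : ∀ i ∈ Finset.range n,
          psum (2*(n-i)) (m+1) * hSq (i+1) (m+1)
          = psum (2*(n-i)) (m+1) * hSq (i+1) m
            + ((m:ℚ)+1)^2 * (psum (2*(n-i)) (m+1) * hSq i (m+1)) := by
        intro i _
        rw [hSq_R2]
        ring
      rw [Finset.sum_congr rfl step1, Finset.sum_add_distrib, ← Finset.mul_sum, ihn (m+1)]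
      have step2 : (∑ i ∈ Finset.range n, psum (2*(n-i)) (m+1) * hSq (i+1) m)
          + psum (2*(n+1)) (m+1)
          = ∑ j ∈ Finset.range (n+1), psum (2*(n+1-j)) (m+1) * hSq j m := by
        rw [Finset.sum_range_succ' (fun j => psum (2*(n+1-j)) (m+1) * hSq j m) n]
        simp [hSq_zero]
      have step3 : ∑ j ∈ Finset.range (n+1), psum (2*(n+1-j)) (m+1) * hSq j m
          = (∑ j ∈ Finset.range (n+1), psum (2*(n+1-j)) m * hSq j m)
            + ∑ j ∈ Finset.range (n+1), ((m:ℚ)+1)^(2*(n+1-j)) * hSq j m := by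
        rw [← Finset.sum_add_distrib]
        refine Finset.sum_congr rfl fun j _ => ?_
        rw [psum_succ]
        ring
      have step4 : ∑ j ∈ Finset.range (n+1), ((m:ℚ)+1)^(2*(n+1-j)) * hSq j m
          = ((m:ℚ)+1)^2 * hSq n (m+1) := by
        rw [hSq_L n m, Finset.mul_sum]
        refine Finset.sum_congr rfl fun j hj => ?_
        rw [← mul_assoc, ← pow_add]
        have := Finset.mem_range.mp hj
        congr 2
        omega
      calc (∑ i ∈ Finset.range n, psum (2*(n-i)) (m+1) * hSq (i+1) m)
            + ((m:ℚ)+1)^2 * ((n:ℚ) * hSq n (m+1)) + psum (2*(n+1)) (m+1)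
          = ((∑ i ∈ Finset.range n, psum (2*(n-i)) (m+1) * hSq (i+1) m)
            + psum (2*(n+1)) (m+1)) + ((m:ℚ)+1)^2 * ((n:ℚ) * hSq n (m+1)) := by ring
        _ = (∑ j ∈ Finset.range (n+1), psum (2*(n+1-j)) (m+1) * hSq j m)
            + ((m:ℚ)+1)^2 * ((n:ℚ) * hSq n (m+1)) := by rw [step2]
        _ = (∑ j ∈ Finset.range (n+1), psum (2*(n+1-j)) m * hSq j m)
            + ((m:ℚ)+1)^2 * hSq n (m+1) + ((m:ℚ)+1)^2 * ((n:ℚ) * hSq n (m+1)) := by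
            rw [step3, step4]; try ring
        _ = ((n:ℚ)+1) * hSq (n+1) m
            + ((m:ℚ)+1)^2 * hSq n (m+1) + ((m:ℚ)+1)^2 * ((n:ℚ) * hSq n (m+1)) := by
            rw [ihm]; try push_cast; try ring
        _ = ((n:ℚ)+1) * (hSq (n+1) m + ((m:ℚ)+1)^2 * hSq n (m+1)) := by ring
        _ = ((n:ℚ)+1) * hSq (n+1) (m+1) := by rw [← hSq_R2]
        _ = _ := by push_cast; try ring

noncomputable def SP (p : ℕ) : Polynomial ℚ :=
  ∑ i ∈ Finset.range (p+1),
    Polynomial.C (bernoulli' i * ((p+1).choose i) / (p+1)) * Polynomial.X^(p+1-i)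

lemma SP_eval (p m : ℕ) : (SP p).eval (m:ℚ) = psum p m := by
  have h1 : psum p m = ∑ k ∈ Finset.Ico 1 (m+1), (k:ℚ)^p := by
    rw [Finset.sum_Ico_eq_sum_range]
    simp only [add_tsub_cancel_right]
    refine Finset.sum_congr rfl fun j _ => ?_
    push_cast
    ring
  rw [h1, sum_Ico_pow, SP]
  rw [Polynomial.eval_finset_sum]
  refine Finset.sum_congr rfl fun i _ => ?_
  simp only [Polynomial.eval_mul, Polynomial.eval_C, Polynomial.eval_pow, Polynomial.eval_X]
  ring

lemma SP_coeff_zero (p : ℕ) : (SP p).coeff 0 = 0 := by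
  rw [SP, Polynomial.finset_sum_coeff]
  apply Finset.sum_eq_zero
  intro i hi
  rw [Polynomial.coeff_C_mul, Polynomial.coeff_X_pow]
  have := Finset.mem_range.mp hi
  rw [if_neg (by omega)]
  ring

lemma SP_coeff_one (p : ℕ) (hp : 0 < p) : (SP p).coeff 1 = bernoulli' p := by
  rw [SP, Polynomial.finset_sum_coeff]
  rw [Finset.sum_eq_single p]
  · rw [Polynomial.coeff_C_mul, Polynomial.coeff_X_pow, if_pos (by omega), mul_one,
      Nat.choose_succ_self_right]
    have : ((p:ℚ)+1) ≠ 0 := by positivity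
    field_simp
    rw [Nat.cast_add, Nat.cast_one]
  · intro i hi hne
    rw [Polynomial.coeff_C_mul, Polynomial.coeff_X_pow]
    have := Finset.mem_range.mp hi
    rw [if_neg (by omega)]
    ring
  · intro h
    exact absurd (Finset.self_mem_range_succ p) h

noncomputable def PP : ℕ → Polynomial ℚ
  | 0 => 1
  | (n+1) => Polynomial.C (1/((n:ℚ)+1)) *
      ∑ k ∈ (Finset.range (n+1)).attach, SP (2*(n+1-(k:ℕ))) * PP (k:ℕ)
  decreasing_by exact Finset.mem_range.mp k.2

lemma PP_succ (n : ℕ) : PP (n+1) = Polynomial.C (1/((n:ℚ)+1)) *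
    ∑ k ∈ Finset.range (n+1), SP (2*(n+1-k)) * PP k := by
  rw [PP, Finset.sum_attach (Finset.range (n+1)) (fun k => SP (2*(n+1-k)) * PP k)]

lemma PP_eval (n : ℕ) : ∀ m : ℕ, (PP n).eval (m:ℚ) = hSq n m := by
  induction n using Nat.strong_induction_on with
  | _ n ih =>
    match n with
    | 0 => intro m; simp [PP, hSq_zero]
    | (n+1) =>
      intro m
      rw [PP_succ]
      rw [Polynomial.eval_mul, Polynomial.eval_C, Polynomial.eval_finset_sum]
      have h1 : ∀ k ∈ Finset.range (n+1),
          (SP (2*(n+1-k)) * PP k).eval (m:ℚ) = psum (2*(n+1-k)) m * hSq k m := by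
        intro k hk
        rw [Polynomial.eval_mul, SP_eval, ih k (Finset.mem_range.mp hk)]
      rw [Finset.sum_congr rfl h1, newton (n+1) m]
      have : ((n:ℚ)+1) ≠ 0 := by positivity
      push_cast
      field_simp

lemma PP_coeff_zero (n : ℕ) (hn : 0 < n) : (PP n).coeff 0 = 0 := by
  match n with
  | (n+1) =>
    rw [PP_succ, Polynomial.coeff_C_mul, Polynomial.finset_sum_coeff]
    rw [Finset.sum_eq_zero, mul_zero]
    intro k _
    rw [Polynomial.mul_coeff_zero, SP_coeff_zero, zero_mul]

lemma PP_coeff_one (n : ℕ) : (PP (n+1)).coeff 1 = bernoulli' (2*(n+1)) / ((n:ℚ)+1) := by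
  rw [PP_succ, Polynomial.coeff_C_mul, Polynomial.finset_sum_coeff]
  rw [Finset.sum_eq_single 0]
  · have h0 : PP 0 = 1 := by rw [PP]
    rw [Polynomial.coeff_mul]
    rw [Finset.Nat.sum_antidiagonal_eq_sum_range_succ_mk]
    rw [Finset.sum_range_succ, Finset.sum_range_one]
    rw [SP_coeff_zero, zero_mul, zero_add, h0, Nat.sub_zero]
    rw [SP_coeff_one _ (by omega)]
    simp [div_eq_mul_inv, mul_comm]
  · intro k hk hne
    rw [Polynomial.coeff_mul, Finset.Nat.sum_antidiagonal_eq_sum_range_succ_mk]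
    rw [Finset.sum_range_succ, Finset.sum_range_one]
    rw [SP_coeff_zero, zero_mul, zero_add]
    rw [PP_coeff_zero k (by omega), mul_zero]
  · intro h
    exact absurd (Finset.mem_range.mpr (by omega)) h

theorem stmt_18 (n : ℕ) (hn : 0 < n) (G : Polynomial ℚ)
    (hval : ∀ k : ℕ, G.eval (k : ℚ) = hSq n (k + 1)) :
    (G.comp (Polynomial.X - 1)).coeff 1 = bernoulli' (2 * n) / n := by
  have hG : G.comp (Polynomial.X - 1) = PP n := by
    apply Polynomial.eq_of_infinite_eval_eq
    apply Set.infinite_of_injective_forall_mem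
      (f := fun k : ℕ => ((k:ℚ)+1))
    · intro a b hab
      simpa using hab
    · intro k
      show (G.comp (Polynomial.X - 1)).eval ((k:ℚ)+1) = (PP n).eval ((k:ℚ)+1)
      rw [Polynomial.eval_comp]
      simp only [Polynomial.eval_sub, Polynomial.eval_X, Polynomial.eval_one,
        add_sub_cancel_right]
      rw [hval k]
      have := PP_eval n (k+1)
      push_cast at this
      rw [this]
  rw [hG]
  match n, hn with
  | (n+1), _ =>
    rw [PP_coeff_one]
    push_cast
    ring
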